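/- Let A be an m-th order n-dimensional real tensor. Then A is an R-tensor if and only if A is an R₀-tensor and the tensor complementarity problem (e, A), where e = (1,1,...,1)ᵀ, has the zero vector as its unique solution. -/

import Mathlib

open Finset

/-- The $i$-th component of $\mathcal{A}x^{m-1}$ for an order-$(m+2)$, dimension-$n$ tensor. -/
def Axm1 {m n : ℕ} (A : (Fin (m + 2) → Fin n) → ℝ) (x : Fin n → ℝ) (i : Fin n) : ℝ :=
  ∑ f : Fin (m + 1) → Fin n, A (Fin.cons i f) * ∏ j, x (f j)

/-- The homogeneous form $\mathcal{A}x^{m}$. -/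
def Axm {m n : ℕ} (A : (Fin (m + 2) → Fin n) → ℝ) (x : Fin n → ℝ) : ℝ :=
  ∑ f : Fin (m + 2) → Fin n, A f * ∏ j, x (f j)

/-- `x` solves the tensor complementarity problem $(q, \mathcal{A})$. -/
def IsTCPSol {m n : ℕ} (A : (Fin (m + 2) → Fin n) → ℝ) (q x : Fin n → ℝ) : Prop :=
  (∀ i, 0 ≤ x i) ∧ (∀ i, 0 ≤ q i + Axm1 A x i) ∧ ∑ i, x i * (q i + Axm1 A x i) = 0

/-- Q-tensor: the TCP $(q,\mathcal{A})$ has a solution for every $q$. -/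
def QTensor {m n : ℕ} (A : (Fin (m + 2) → Fin n) → ℝ) : Prop :=
  ∀ q : Fin n → ℝ, ∃ x : Fin n → ℝ, IsTCPSol A q x

/-- R-tensor. -/
def RTensor {m n : ℕ} (A : (Fin (m + 2) → Fin n) → ℝ) : Prop :=
  ¬ ∃ (x : Fin n → ℝ) (t : ℝ), (∀ i, 0 ≤ x i) ∧ x ≠ 0 ∧ 0 ≤ t ∧
      (∀ i, 0 < x i → Axm1 A x i + t = 0) ∧ (∀ j, x j = 0 → 0 ≤ Axm1 A x j + t)

/-- R₀-tensor. -/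
def R0Tensor {m n : ℕ} (A : (Fin (m + 2) → Fin n) → ℝ) : Prop :=
  ¬ ∃ x : Fin n → ℝ, (∀ i, 0 ≤ x i) ∧ x ≠ 0 ∧
      (∀ i, 0 < x i → Axm1 A x i = 0) ∧ (∀ j, x j = 0 → 0 ≤ Axm1 A x j)

/-- Semi-positive tensor. -/
def SemiPositive {m n : ℕ} (A : (Fin (m + 2) → Fin n) → ℝ) : Prop :=
  ∀ x : Fin n → ℝ, (∀ i, 0 ≤ x i) → x ≠ 0 → ∃ k, 0 < x k ∧ 0 ≤ Axm1 A x k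

/-- Strictly semi-positive tensor. -/
def StrictlySemiPositive {m n : ℕ} (A : (Fin (m + 2) → Fin n) → ℝ) : Prop :=
  ∀ x : Fin n → ℝ, (∀ i, 0 ≤ x i) → x ≠ 0 → ∃ k, 0 < x k ∧ 0 < Axm1 A x k

/-- P-tensor. -/
def PTensor {m n : ℕ} (A : (Fin (m + 2) → Fin n) → ℝ) : Prop :=
  ∀ x : Fin n → ℝ, x ≠ 0 → ∃ i, 0 < x i * Axm1 A x i

/-- Symmetric tensor: entries invariant under permutation of indices. -/
def SymTensor {m n : ℕ} (A : (Fin (m + 2) → Fin n) → ℝ) : Prop :=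
  ∀ (f : Fin (m + 2) → Fin n) (σ : Equiv.Perm (Fin (m + 2))), A (f ∘ σ) = A f

lemma Axm1_smul {m n : ℕ} (A : (Fin (m + 2) → Fin n) → ℝ) (c : ℝ) (x : Fin n → ℝ)
    (i : Fin n) : Axm1 A (fun j => c * x j) i = c ^ (m + 1) * Axm1 A x i := by
  unfold Axm1
  rw [Finset.mul_sum]
  refine Finset.sum_congr rfl fun f _ => ?_
  rw [Finset.prod_mul_distrib, Finset.prod_const, Finset.card_univ, Fintype.card_fin]
  ring

lemma Axm1_zero {m n : ℕ} (A : (Fin (m + 2) → Fin n) → ℝ) (i : Fin n) :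
    Axm1 A (0 : Fin n → ℝ) i = 0 := by
  unfold Axm1
  refine Finset.sum_eq_zero fun f _ => ?_
  have : (∏ j, (0 : Fin n → ℝ) (f j)) = 0 := by
    simp [Finset.prod_const]
  rw [this, mul_zero]

/-- Copositive tensor. -/
def Copositive {m n : ℕ} (A : (Fin (m + 2) → Fin n) → ℝ) : Prop :=
  ∀ x : Fin n → ℝ, (∀ i, 0 ≤ x i) → 0 ≤ Axm A x

/-- Strictly copositive tensor. -/
def StrictlyCopositive {m n : ℕ} (A : (Fin (m + 2) → Fin n) → ℝ) : Prop :=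
  ∀ x : Fin n → ℝ, (∀ i, 0 ≤ x i) → x ≠ 0 → 0 < Axm A x

theorem stmt1 {m n : ℕ} (A : (Fin (m + 2) → Fin n) → ℝ) :
    RTensor A ↔ (R0Tensor A ∧ ∀ x : Fin n → ℝ, IsTCPSol A (fun _ => 1) x ↔ x = 0) := by
  constructor
  · intro hR
    constructor
    · rintro ⟨x, h1, h2, h3, h4⟩
      exact hR ⟨x, 0, h1, h2, le_refl 0,
        fun i hi => by rw [add_zero]; exact h3 i hi,
        fun j hj => by rw [add_zero]; exact h4 j hj⟩
    · intro x
      constructor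
      · rintro ⟨hge, hpos, hsum⟩
        by_contra hx
        have hterm : ∀ i ∈ Finset.univ, x i * ((1 : ℝ) + Axm1 A x i) = 0 := by
          rw [← Finset.sum_eq_zero_iff_of_nonneg
            (fun i _ => mul_nonneg (hge i) (hpos i))]
          exact hsum
        exact hR ⟨x, 1, hge, hx, zero_le_one,
          fun i hi => by
            have := hterm i (Finset.mem_univ i)
            have h2 := (mul_eq_zero.mp this).resolve_left hi.ne'
            linarith,
          fun j hj => by have h := hpos j; dsimp only at h; linarith⟩
      · rintro rfl
        refine ⟨fun i => le_refl 0, fun i => ?_, ?_⟩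
        · rw [Axm1_zero]; norm_num
        · exact Finset.sum_eq_zero fun i _ => by simp
  · rintro ⟨hR0, huniq⟩ ⟨x, t, hge, hx, ht, h1, h2⟩
    rcases ht.eq_or_lt with rfl | htpos
    · exact hR0 ⟨x, hge, hx,
        fun i hi => by have := h1 i hi; linarith,
        fun j hj => by have := h2 j hj; linarith⟩
    · have ht0 : t ≠ 0 := htpos.ne'
      obtain ⟨c, hc, hct⟩ : ∃ c : ℝ, 0 < c ∧ c ^ (m + 1) = t := by
        refine ⟨t ^ ((m + 1 : ℝ))⁻¹, Real.rpow_pos_of_pos htpos _, ?_⟩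
        rw [← Real.rpow_natCast (t ^ _), ← Real.rpow_mul htpos.le]
        rw [Nat.cast_add, Nat.cast_one, inv_mul_cancel₀ (by positivity : ((m:ℝ)+1) ≠ 0),
          Real.rpow_one]
      set y : Fin n → ℝ := fun i => c⁻¹ * x i with hy
      have hAy : ∀ i, Axm1 A y i = t⁻¹ * Axm1 A x i := by
        intro i
        rw [hy, Axm1_smul, inv_pow, hct]
      have hypos : ∀ i, 0 ≤ (1 : ℝ) + Axm1 A y i := by
        intro i
        rw [hAy]
        rcases (hge i).eq_or_lt with hi | hi
        · have := h2 i hi.symm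
          have : 0 ≤ t⁻¹ * (Axm1 A x i + t) := mul_nonneg (inv_nonneg.mpr ht) this
          have ht1 : t⁻¹ * t = 1 := inv_mul_cancel₀ ht0
          nlinarith
        · have := h1 i hi
          have hAx : Axm1 A x i = -t := by linarith
          rw [hAx]
          field_simp
          norm_num
      have hsol : IsTCPSol A (fun _ => 1) y := by
        refine ⟨fun i => mul_nonneg (inv_nonneg.mpr hc.le) (hge i), hypos, ?_⟩
        refine Finset.sum_eq_zero fun i _ => ?_
        rcases (hge i).eq_or_lt with hi | hi
        · rw [hy]; simp [← hi]
        · have := h1 i hi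
          have hAx : Axm1 A x i = -t := by linarith
          have : (1 : ℝ) + Axm1 A y i = 0 := by
            rw [hAy, hAx]
            field_simp
            norm_num
          rw [this, mul_zero]
      have hy0 := (huniq y).mp hsol
      obtain ⟨k, hk⟩ : ∃ k, 0 < x k := by
        by_contra h
        push_neg at h
        exact hx (funext fun i => le_antisymm (h i) (hge i))
      have : y k = 0 := by rw [hy0]; rfl
      have : 0 < y k := mul_pos (inv_pos.mpr hc) hk
      linarith [this, hy0 ▸ this]
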